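/- arXiv:2005.14466 — 7 statements merged into one kernel-verified Lean document; each statement's English description precedes it below -/
import Mathlib

section
/- For every positive integer n, the finite sum \(\sum_{k=0}^{n-1} \frac{(4k-1)^3}{256^k (2k-1)^4} \binom{2k}{k}^4\) equals \(\frac{16 n^4 (8n^2 - 12n + 3) \binom{2n}{n}^4}{256^n (2n-1)^4}\). -/
lemma cb_rec (n : ℕ) :
    ((Nat.choose (2 * (n+1)) (n+1) : ℚ)) * (n+1) = 2 * (2*n+1) * (Nat.choose (2*n) n : ℚ) := by
  have h := Nat.succ_mul_centralBinom_succ n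
  have : ((n+1) * Nat.centralBinom (n+1) : ℚ) = (2 * (2*n+1) * Nat.centralBinom n : ℚ) := by
    exact_mod_cast congrArg (Nat.cast : ℕ → ℚ) h
  simp [Nat.centralBinom] at this
  linarith

theorem stmt_0 (n : ℕ) (hn : 0 < n) :
    ∑ k ∈ Finset.range n,
      (4 * (k : ℚ) - 1) ^ 3 / (256 ^ k * (2 * (k : ℚ) - 1) ^ 4) * (Nat.choose (2 * k) k : ℚ) ^ 4
    = 16 * (n : ℚ) ^ 4 * (8 * (n : ℚ) ^ 2 - 12 * (n : ℚ) + 3) * (Nat.choose (2 * n) n : ℚ) ^ 4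
        / (256 ^ n * (2 * (n : ℚ) - 1) ^ 4) := by
  induction n with
  | zero => exact absurd hn (lt_irrefl 0)
  | succ n ih =>
    rcases Nat.eq_zero_or_pos n with h0 | hpos
    · subst h0; norm_num [Finset.sum_range_succ]
    · rw [Finset.sum_range_succ, ih hpos]
      have h1 : (2 * (n:ℚ) - 1) ≠ 0 := by
        have : (1:ℚ) ≤ (n:ℚ) := by exact_mod_cast hpos
        nlinarith
      have h2 : (2 * ((n:ℚ)+1) - 1) ≠ 0 := by
        have : (0:ℚ) ≤ (n:ℚ) := Nat.cast_nonneg n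
        nlinarith
      have h3 : (256:ℚ) ^ n ≠ 0 := by positivity
      have h4 : ((n:ℚ)+1) ≠ 0 := by positivity
      have hD : ((Nat.choose (2 * (n+1)) (n+1) : ℚ))
          = 2 * (2*(n:ℚ)+1) * (Nat.choose (2*n) n : ℚ) / ((n:ℚ)+1) := by
        rw [eq_div_iff h4]; exact_mod_cast cb_rec n
      push_cast
      rw [hD]
      rw [div_mul_eq_mul_div, ← add_div, div_pow, div_eq_div_iff (mul_ne_zero h3 (pow_ne_zero 4 h1)) (mul_ne_zero (by positivity) (pow_ne_zero 4 h2))]; field_simp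
      ring
end

section
/- Let q be an indeterminate (or a nonzero element of a field with suitable nonvanishing assumptions) and n a positive integer. Then \(\sum_{k=0}^{n-1} [4k-1]_{q^2} [4k-1]_q^2 \frac{(q^{-2};q^4)_k^4}{(q^4;q^4)_k^4} q^{4k} = (q^{2n}+1)^4 [n]_{q^2}^4 \frac{(q^{-2};q^4)_n^4}{(q^4;q^4)_n^4} \Big( 2\cdot\frac{q^5 + q^{4n+1}(q^{4n-2} - q^2 - 1)}{(q^2-1)^2} - q^{4n} \Big)\). -/
set_option maxHeartbeats 4000000


open Finset

/-- The `q`-integer `[m]_x = (1 - x^m)/(1 - x)` for `m : ℤ`. -/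
noncomputable def qint (m : ℤ) (x : RatFunc ℚ) : RatFunc ℚ := (1 - x ^ m) / (1 - x)

/-- The `q`-shifted factorial `(a; x)_k = ∏_{j=0}^{k-1} (1 - a x^j)`. -/
noncomputable def qpoch (a x : RatFunc ℚ) (k : ℕ) : RatFunc ℚ :=
  ∏ j ∈ Finset.range k, (1 - a * x ^ j)

lemma xpow_ne_one (m : ℕ) (hm : m ≠ 0) : (RatFunc.X : RatFunc ℚ) ^ m ≠ 1 := by
  intro h
  have h2 : (algebraMap (Polynomial ℚ) (RatFunc ℚ)) (Polynomial.X ^ m) =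
      (algebraMap (Polynomial ℚ) (RatFunc ℚ)) 1 := by
    rw [map_pow, map_one, RatFunc.algebraMap_X, h]
  have := RatFunc.algebraMap_injective ℚ h2
  have := congrArg Polynomial.natDegree this
  simp [Polynomial.natDegree_X_pow] at this
  exact hm this

lemma one_sub_xpow_ne (m : ℕ) (hm : m ≠ 0) : (1 : RatFunc ℚ) - RatFunc.X ^ m ≠ 0 := by
  intro h
  exact xpow_ne_one m hm (by linear_combination -h)

lemma qpoch_succ (a x : RatFunc ℚ) (k : ℕ) :
    qpoch a x (k + 1) = qpoch a x k * (1 - a * x ^ k) := Finset.prod_range_succ _ _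

lemma qpochb_ne (n : ℕ) : qpoch (RatFunc.X ^ 4) (RatFunc.X ^ 4) n ≠ 0 := by
  unfold qpoch
  rw [Finset.prod_ne_zero_iff]
  intro j _
  rw [show (RatFunc.X : RatFunc ℚ) ^ 4 * (RatFunc.X ^ 4) ^ j = RatFunc.X ^ (4 + 4 * j) by ring]
  exact one_sub_xpow_ne (4 + 4 * j) (by omega)

theorem stmt_1 (n : ℕ) (hn : 0 < n) :
    ∑ k ∈ Finset.range n,
        qint (4 * (k : ℤ) - 1) (RatFunc.X ^ 2) * (qint (4 * (k : ℤ) - 1) RatFunc.X) ^ 2 *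
          (qpoch (RatFunc.X ^ (-2 : ℤ)) (RatFunc.X ^ 4) k) ^ 4 /
            (qpoch (RatFunc.X ^ 4) (RatFunc.X ^ 4) k) ^ 4 * RatFunc.X ^ (4 * k)
    = (RatFunc.X ^ (2 * n) + 1) ^ 4 * (qint (n : ℤ) (RatFunc.X ^ 2)) ^ 4 *
        (qpoch (RatFunc.X ^ (-2 : ℤ)) (RatFunc.X ^ 4) n) ^ 4 /
          (qpoch (RatFunc.X ^ 4) (RatFunc.X ^ 4) n) ^ 4 *
        (2 * (RatFunc.X ^ 5 + RatFunc.X ^ (4 * (n : ℤ) + 1) *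
              (RatFunc.X ^ (4 * (n : ℤ) - 2) - RatFunc.X ^ 2 - 1)) /
            ((RatFunc.X ^ 2 - 1) ^ 2) - RatFunc.X ^ (4 * n)) := by
  clear hn
  induction n with
  | zero => simp [qint]
  | succ n ih =>
    have hX : (RatFunc.X : RatFunc ℚ) ≠ 0 := RatFunc.X_ne_zero
    have key : ∀ a b : ℕ, (RatFunc.X : RatFunc ℚ) ^ ((a : ℤ) - (b : ℤ))
        = RatFunc.X ^ a / RatFunc.X ^ b := fun a b => by
      rw [zpow_sub₀ hX, zpow_natCast, zpow_natCast]
    have key2 : ∀ a b : ℕ, ((RatFunc.X : RatFunc ℚ) ^ 2) ^ ((a : ℤ) - (b : ℤ))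
        = RatFunc.X ^ (2 * a) / RatFunc.X ^ (2 * b) := fun a b => by
      rw [zpow_sub₀ (pow_ne_zero 2 hX), zpow_natCast, zpow_natCast, ← pow_mul, ← pow_mul]
    have e1 : ((RatFunc.X : RatFunc ℚ) ^ 2) ^ (4 * (n : ℤ) - 1)
        = RatFunc.X ^ (2 * (4 * n)) / RatFunc.X ^ (2 * 1) := by
      rw [show 4 * (n : ℤ) - 1 = ((4 * n : ℕ) : ℤ) - ((1 : ℕ) : ℤ) by push_cast; ring]
      exact key2 _ _
    have e2 : (RatFunc.X : RatFunc ℚ) ^ (4 * (n : ℤ) - 1)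
        = RatFunc.X ^ (4 * n) / RatFunc.X ^ 1 := by
      rw [show 4 * (n : ℤ) - 1 = ((4 * n : ℕ) : ℤ) - ((1 : ℕ) : ℤ) by push_cast; ring]
      exact key _ _
    have e3 : ((RatFunc.X : RatFunc ℚ) ^ 2) ^ (((n + 1 : ℕ)) : ℤ) = RatFunc.X ^ (2 * (n + 1)) := by
      rw [zpow_natCast, ← pow_mul]
    have e4 : (RatFunc.X : RatFunc ℚ) ^ (4 * ((n + 1 : ℕ) : ℤ) + 1) = RatFunc.X ^ (4 * n + 5) := by
      rw [show 4 * ((n + 1 : ℕ) : ℤ) + 1 = ((4 * n + 5 : ℕ) : ℤ) by push_cast; ring, zpow_natCast]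
    have e5 : (RatFunc.X : RatFunc ℚ) ^ (4 * ((n + 1 : ℕ) : ℤ) - 2) = RatFunc.X ^ (4 * n + 2) := by
      rw [show 4 * ((n + 1 : ℕ) : ℤ) - 2 = ((4 * n + 2 : ℕ) : ℤ) by push_cast; ring, zpow_natCast]
    have e6 : (RatFunc.X : RatFunc ℚ) ^ (-2 : ℤ) = (RatFunc.X ^ 2)⁻¹ := by
      rw [show (-2 : ℤ) = -((2 : ℕ) : ℤ) by norm_num, zpow_neg, zpow_natCast]
    have f6 : (1 : RatFunc ℚ) - RatFunc.X ^ (-2 : ℤ) * (RatFunc.X ^ 4) ^ n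
        = (RatFunc.X ^ 2 - RatFunc.X ^ (4 * n)) / RatFunc.X ^ 2 := by
      rw [e6, eq_div_iff (pow_ne_zero 2 hX)]
      field_simp
      ring
    have e7 : (RatFunc.X : RatFunc ℚ) ^ (4 * (n : ℤ) + 1) = RatFunc.X ^ (4 * n + 1) := by
      rw [show 4 * (n : ℤ) + 1 = ((4 * n + 1 : ℕ) : ℤ) by push_cast; ring, zpow_natCast]
    have e8 : (RatFunc.X : RatFunc ℚ) ^ (4 * (n : ℤ) - 2)
        = RatFunc.X ^ (4 * n) / RatFunc.X ^ 2 := by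
      rw [show 4 * (n : ℤ) - 2 = ((4 * n : ℕ) : ℤ) - ((2 : ℕ) : ℤ) by push_cast; ring]
      exact key _ _
    have hb : qpoch (RatFunc.X ^ 4) (RatFunc.X ^ 4) n ≠ 0 := qpochb_ne n
    have h4 : (1 : RatFunc ℚ) - RatFunc.X ^ 4 * (RatFunc.X ^ 4) ^ n ≠ 0 := by
      rw [show (RatFunc.X : RatFunc ℚ) ^ 4 * (RatFunc.X ^ 4) ^ n = RatFunc.X ^ (4 + 4 * n) by ring]
      exact one_sub_xpow_ne _ (by omega)
    have h1 : (1 : RatFunc ℚ) - RatFunc.X ≠ 0 := by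
      have := one_sub_xpow_ne 1 one_ne_zero; rwa [pow_one] at this
    have h2 : (1 : RatFunc ℚ) - RatFunc.X ^ 2 ≠ 0 := one_sub_xpow_ne 2 (by norm_num)
    have h2' : (RatFunc.X : RatFunc ℚ) ^ 2 - 1 ≠ 0 := by
      intro h; exact h2 (by linear_combination -h)
    rw [Finset.sum_range_succ, ih, qpoch_succ, qpoch_succ]
    simp only [qint, f6, e1, e2, e3, e4, e5, e7, e8]
    field_simp
    have hD1 : RatFunc.X ^ 2 * (1 - RatFunc.X ^ 2) * (RatFunc.X * (1 - RatFunc.X)) ^ 2 *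
        qpoch (RatFunc.X ^ 4) (RatFunc.X ^ 4) n ^ 4 ≠ (0 : RatFunc ℚ) :=
      mul_ne_zero (mul_ne_zero (mul_ne_zero (pow_ne_zero 2 hX) h2)
        (pow_ne_zero 2 (mul_ne_zero hX h1))) (pow_ne_zero 4 hb)
    have hD2 : (1 - RatFunc.X ^ 2) ^ 4 * (RatFunc.X ^ 2) ^ 4 *
        (qpoch (RatFunc.X ^ 4) (RatFunc.X ^ 4) n * (1 - RatFunc.X ^ 4 * (RatFunc.X ^ 4) ^ n)) ^ 4 *
        (RatFunc.X ^ 2 - 1) ^ 2 ≠ (0 : RatFunc ℚ) :=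
      mul_ne_zero (mul_ne_zero (mul_ne_zero (pow_ne_zero 4 h2)
        (pow_ne_zero 4 (pow_ne_zero 2 hX))) (pow_ne_zero 4 (mul_ne_zero hb h4)))
        (pow_ne_zero 2 h2')
    simp only [zpow_natCast]
    ring
end

section
/- Let p be an odd prime and r a positive integer. Then \(\sum_{k=0}^{(p^r+1)/2} \frac{(4k-1)^3}{256^k (2k-1)^4} \binom{2k}{k}^4 \equiv 3 p^{4r} \pmod{p^{4r+1}}\), where the sum is a rational number whose denominator is coprime to p. -/
lemma closed_form (n : ℕ) :
    (∑ k ∈ Finset.range (n+1),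
      (4 * (k : ℚ) - 1) ^ 3 / (256 ^ k * (2 * (k : ℚ) - 1) ^ 4) *
        (Nat.choose (2 * k) k : ℚ) ^ 4)
    = (8*(n:ℚ)^2+4*n-1) * (Nat.choose (2*n) n : ℚ)^4 / 256^n := by
  induction n with
  | zero => norm_num
  | succ n ih =>
    rw [Finset.sum_range_succ, ih]
    have h1 : ((n:ℚ)+1) * (Nat.choose (2*(n+1)) (n+1) : ℚ)
        = 2*(2*(n:ℚ)+1) * (Nat.choose (2*n) n : ℚ) := by
      exact_mod_cast congrArg (Nat.cast : ℕ → ℚ) (Nat.succ_mul_centralBinom_succ n)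
    have hn1 : ((n:ℚ)+1) ≠ 0 := by positivity
    have h2 : (Nat.choose (2*(n+1)) (n+1) : ℚ)
        = 2*(2*(n:ℚ)+1) * (Nat.choose (2*n) n : ℚ) / ((n:ℚ)+1) := by
      field_simp
      linarith [h1]
    push_cast
    rw [h2]
    have h3 : (2*((n:ℚ)+1)-1) ≠ 0 := by
      have : (0:ℚ) ≤ n := Nat.cast_nonneg n
      intro h; nlinarith
    have h4 : (256:ℚ)^n ≠ 0 := by positivity
    have h3' : (2*(n:ℚ)+1) ≠ 0 := by positivity
    rw [show (2*((n:ℚ)+1)-1) = 2*n+1 by ring]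
    field_simp
    ring


lemma choose_pred_zmod (p : ℕ) [Fact p.Prime] :
    ∀ k, k < p → ((Nat.choose (p-1) k : ℕ) : ZMod p) = (-1)^k := by
  intro k
  induction k with
  | zero => simp
  | succ k ih =>
    intro hk
    have hk' : k < p := Nat.lt_of_succ_lt hk
    have hrec := Nat.choose_succ_right_eq (p-1) k
    have hkle : k ≤ p - 1 := by omega
    have hcast : (((p-1) - k : ℕ) : ZMod p) = -(1+k) := by
      rw [Nat.cast_sub hkle, Nat.cast_sub (by omega : 1 ≤ p)]
      simp [ZMod.natCast_self]
      ring
    have h2 : ((Nat.choose (p-1) (k+1) : ℕ) : ZMod p) * (k+1)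
        = (-1)^k * (-(1+k)) := by
      rw [← ih hk', ← hcast]
      exact_mod_cast congrArg (Nat.cast : ℕ → ZMod p) hrec
    have hne : ((k+1 : ℕ) : ZMod p) ≠ 0 := by
      rw [Ne, ZMod.natCast_eq_zero_iff]
      intro h
      exact absurd (Nat.le_of_dvd (by omega) h) (by omega)
    have : ((Nat.choose (p-1) (k+1) : ℕ) : ZMod p) * (k+1) = (-1)^(k+1) * (k+1) := by
      rw [h2]; push_cast; ring
    have hne' : ((k:ZMod p)+1) ≠ 0 := by exact_mod_cast hne
    exact mul_right_cancel₀ hne' this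

lemma B_pow_four (p : ℕ) [Fact p.Prime] (hodd : Odd p) :
    ∀ r : ℕ, ((Nat.choose (p^r - 1) ((p^r - 1)/2) : ℕ) : ZMod p)^4 = 1 := by
  have hp := (Fact.out : p.Prime)
  have hp2 : 2 ≤ p := hp.two_le
  intro r
  induction r with
  | zero => simp
  | succ r ih =>
    obtain ⟨t, ht⟩ := (hodd.pow : Odd (p^r))
    have hpr : 1 ≤ p ^ r := Nat.one_le_pow _ _ (by omega)
    have hN : p^(r+1) - 1 = (p-1) + p * (p^r - 1) := by
      have : p^(r+1) = p * p^r := by ring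
      rw [this]
      have h5 : p * (p^r - 1) = p * p^r - p := by rw [Nat.mul_sub, mul_one]
      have := Nat.mul_le_mul_left p hpr
      omega
    have hk : (p^(r+1) - 1)/2 = (p-1)/2 + p * ((p^r - 1)/2) := by
      obtain ⟨s, hs⟩ := hodd
      have h1 : (p^r - 1)/2 = t := by omega
      have h2 : (p-1)/2 = s := by omega
      have h3 : p^(r+1) = p * p^r := by ring
      rw [h1, h2, h3, ht, hs]
      have : (2*s+1) * (2*t+1) - 1 = 2 * (s + (2*s+1)*t) := by ring_nf; omega
      rw [this]
      omega
    have lucas := Choose.choose_modEq_choose_mod_mul_choose_div_nat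
      (p := p) (n := p^(r+1)-1) (k := (p^(r+1)-1)/2)
    have hmodN : (p^(r+1) - 1) % p = p - 1 := by
      rw [hN, Nat.add_mul_mod_self_left, Nat.mod_eq_of_lt (by omega)]
    have hdivN : (p^(r+1) - 1) / p = p^r - 1 := by
      rw [hN, Nat.add_mul_div_left _ _ (by omega : 0 < p), Nat.div_eq_of_lt (by omega)]
      omega
    have hmodk : ((p^(r+1) - 1)/2) % p = (p-1)/2 := by
      rw [hk, Nat.add_mul_mod_self_left, Nat.mod_eq_of_lt (by omega)]
    have hdivk : ((p^(r+1) - 1)/2) / p = (p^r - 1)/2 := by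
      rw [hk, Nat.add_mul_div_left _ _ (by omega : 0 < p), Nat.div_eq_of_lt (by omega)]
      omega
    rw [hmodN, hdivN, hmodk, hdivk] at lucas
    have hcast : ((Nat.choose (p^(r+1)-1) ((p^(r+1)-1)/2) : ℕ) : ZMod p)
        = ((Nat.choose (p-1) ((p-1)/2) * Nat.choose (p^r-1) ((p^r-1)/2) : ℕ) : ZMod p) :=
      (ZMod.natCast_eq_natCast_iff _ _ _).mpr lucas
    rw [hcast]
    push_cast
    rw [mul_pow, ih, mul_one, choose_pred_zmod p _ (by omega)]
    rw [← pow_mul]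
    have : (p-1)/2 * 4 = 2 * (2 * ((p-1)/2)) := by ring
    rw [this, pow_mul]
    simp

lemma norm_nat_eq_one_of_not_dvd (p : ℕ) [Fact p.Prime] (k : ℕ) (h : ¬ p ∣ k) :
    ‖((k:ℕ) : ℚ_[p])‖ = 1 := by
  have h1 : ‖((k:ℤ) : ℚ_[p])‖ ≤ 1 := Padic.norm_int_le_one _
  have h2 : ¬ ‖((k:ℤ) : ℚ_[p])‖ < 1 := by
    rw [Padic.norm_intCast_lt_one_iff]
    exact_mod_cast h
  have := le_antisymm h1 (not_lt.mp h2)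
  simpa using this

theorem main_aux (p : ℕ) [Fact p.Prime] (hodd : Odd p) (r : ℕ) (hr : 0 < r)
    (n t : ℕ) (ht : p ^ r = 2*t+1) (hn : n = t+1) :
    ‖(((8*(n:ℚ)^2+4*n-1) * (Nat.choose (2*n) n : ℚ)^4 / 256^n : ℚ) : ℚ_[p])
        - 3 * (p : ℚ_[p]) ^ (4 * r)‖ ≤ (p : ℝ) ^ (-(4 * (r : ℤ) + 1)) := by
  have hp : p.Prime := Fact.out
  have hp2 : 2 ≤ p := hp.two_le
  have hpne2 : p ≠ 2 := by rintro rfl; exact (Nat.not_odd_iff_even.mpr even_two) hodd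
  have hp3 : 3 ≤ p := by omega
  have h2n : 2 * n = p ^ r + 1 := by omega
  set B : ℕ := Nat.choose (2*t) t with hB
  -- key combinatorial identity
  have key : n * Nat.choose (2*n) n = 2 * p^r * B := by
    have e1 : Nat.choose (2*n) n = Nat.choose (2*t+1) t + Nat.choose (2*t+1) (t+1) := by
      have h22 : 2*n = (2*t+1)+1 := by omega
      rw [h22, hn]
      exact Nat.choose_succ_succ' (2*t+1) t
    have e2 : Nat.choose (2*t+1) t = Nat.choose (2*t+1) (t+1) := by
      have h := Nat.choose_symm (by omega : t+1 ≤ 2*t+1)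
      have hsub : 2*t+1 - (t+1) = t := by omega
      rw [hsub] at h
      exact h
    have e3 : (2*t+1) * Nat.choose (2*t) t = Nat.choose (2*t+1) (t+1) * (t+1) :=
      Nat.add_one_mul_choose_eq (2*t) t
    rw [e1, ← e2, hn, ht]
    nlinarith [e3, e2]
  -- not-dvd facts
  have hpn : ¬ p ∣ n := by
    intro h
    have h1 : p ∣ 2*n := Dvd.dvd.mul_left h 2
    have h2 : p ∣ p^r := dvd_pow_self p (by omega)
    rw [h2n] at h1
    have h3 : p ∣ 1 := (Nat.dvd_add_right h2).mp h1
    exact absurd (Nat.le_of_dvd one_pos h3) (by omega)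
  have hp256 : ¬ p ∣ 256 := by
    intro h
    have h256 : (256:ℕ) = 2^8 := by norm_num
    rw [h256] at h
    have h4 : p ∣ 2 := hp.dvd_of_dvd_pow h
    exact absurd (Nat.le_of_dvd two_pos h4) (by omega)
  -- ZMod p facts
  have h2z : (2 : ZMod p) ≠ 0 := by
    have : ((2:ℕ) : ZMod p) ≠ 0 := by
      rw [Ne, ZMod.natCast_eq_zero_iff]
      intro h
      exact absurd (Nat.le_of_dvd two_pos h) (by omega)
    simpa using this
  have h16 : (16 : ZMod p) ≠ 0 := by
    have h5 : (16 : ZMod p) = 2^4 := by norm_num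
    rw [h5]; exact pow_ne_zero _ h2z
  have hBz : ((B:ℕ) : ZMod p)^4 = 1 := by
    have hb := B_pow_four p hodd r
    have h1 : p^r - 1 = 2*t := by omega
    rw [h1] at hb
    have h2 : (2*t)/2 = t := by omega
    rw [h2] at hb
    exact hb
  have hpz : ((p:ℕ) : ZMod p) = 0 := ZMod.natCast_self p
  have h2nz : (2 : ZMod p) * (n:ℕ) = 1 := by
    have h6 := congrArg (Nat.cast : ℕ → ZMod p) h2n
    push_cast at h6
    rw [hpz, zero_pow (by omega : r ≠ 0)] at h6
    rw [h6]; ring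
  have h256z : (256 : ZMod p)^n = 256 := by
    have e : (256:ZMod p) = 2^8 := by norm_num
    have h8n : 8*n = 4*p^r + 4 := by rw [ht]; omega
    rw [e, ← pow_mul, h8n, pow_add, pow_mul, ZMod.pow_card_pow]
    norm_num
  set X : ℕ := (2*p^(2*r)+6*p^r+3)*16*B^4 with hX
  set Y : ℕ := 3*n^4*256^n with hY
  have hzmod : ((X:ℕ) : ZMod p) = ((Y:ℕ) : ZMod p) := by
    apply mul_left_cancel₀ h16
    have hXz : ((X:ℕ) : ZMod p) = 48 * ((B:ℕ):ZMod p)^4 := by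
      rw [hX]; push_cast
      rw [hpz, zero_pow (by omega : 2*r ≠ 0), zero_pow (by omega : r ≠ 0)]
      ring
    have hYz : (16:ZMod p) * ((Y:ℕ) : ZMod p) = 3 * ((2:ZMod p)*(n:ℕ))^4 * (256:ZMod p)^n := by
      rw [hY]; push_cast; ring
    rw [hXz, hYz, hBz, h2nz, h256z]
    norm_num
  have hdvd : ((p:ℤ))^1 ∣ (X:ℤ) - (Y:ℤ) := by
    rw [pow_one]
    have := (ZMod.intCast_zmod_eq_zero_iff_dvd ((X:ℤ) - (Y:ℤ)) p).mp
    apply this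
    push_cast
    rw [hzmod]; ring
  -- rewrite the expression
  have hn0 : ((n:ℕ):ℚ_[p]) ≠ 0 := Nat.cast_ne_zero.mpr (by omega)
  have h2560 : ((256:ℚ_[p]))^n ≠ 0 := pow_ne_zero _ (by norm_num)
  have hCq : ((n:ℕ):ℚ_[p]) * ((Nat.choose (2*n) n : ℕ):ℚ_[p]) = 2*(p:ℚ_[p])^r * ((B:ℕ):ℚ_[p]) := by
    exact_mod_cast congrArg (Nat.cast : ℕ → ℚ_[p]) key
  have h2nq : (2:ℚ_[p])*(n:ℕ) = (p:ℚ_[p])^r + 1 := by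
    exact_mod_cast congrArg (Nat.cast : ℕ → ℚ_[p]) h2n
  have hc : ((Nat.choose (2*n) n : ℕ):ℚ_[p]) = 2*(p:ℚ_[p])^r * ((B:ℕ):ℚ_[p]) / ((n:ℕ):ℚ_[p]) := by
    rw [eq_div_iff hn0]
    linear_combination hCq
  have hA : (8*((n:ℕ):ℚ_[p])^2+4*((n:ℕ):ℚ_[p])-1)
      = 2*((p:ℚ_[p])^r)^2+6*(p:ℚ_[p])^r+3 := by
    linear_combination (2*(2*((n:ℕ):ℚ_[p])+(p:ℚ_[p])^r+1)+2) * h2nq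
  have hQ : (((8*(n:ℚ)^2+4*n-1) * (Nat.choose (2*n) n : ℚ)^4 / 256^n : ℚ) : ℚ_[p])
        - 3 * (p : ℚ_[p]) ^ (4 * r)
      = (p:ℚ_[p])^(4*r) * (((X:ℕ):ℚ_[p]) - ((Y:ℕ):ℚ_[p])) / (((n:ℕ):ℚ_[p])^4 * (256:ℚ_[p])^n) := by
    push_cast
    rw [hc, hX, hY]
    push_cast
    rw [hA]
    field_simp
    ring
  rw [hQ]
  have hnum : (((X:ℕ):ℚ_[p]) - ((Y:ℕ):ℚ_[p])) = (((X:ℤ) - (Y:ℤ) : ℤ) : ℚ_[p]) := by push_cast; ring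
  have hbound : ‖(((X:ℤ) - (Y:ℤ) : ℤ) : ℚ_[p])‖ ≤ (p:ℝ)^(-(1:ℕ):ℤ) :=
    (Padic.norm_int_le_pow_iff_dvd _ 1).mpr hdvd
  have hden : ‖((n:ℕ):ℚ_[p])^4 * (256:ℚ_[p])^n‖ = 1 := by
    rw [norm_mul, norm_pow, norm_pow]
    rw [norm_nat_eq_one_of_not_dvd p n hpn]
    have : (256:ℚ_[p]) = ((256:ℕ):ℚ_[p]) := by norm_num
    rw [this, norm_nat_eq_one_of_not_dvd p 256 hp256]
    norm_num
  rw [norm_div, norm_mul, hden, div_one, hnum, Padic.norm_p_pow]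
  have hfin : (p:ℝ) ^ (-(4 * (r:ℤ) + 1)) = (p:ℝ)^(-(4*r:ℕ):ℤ) * (p:ℝ)^(-(1:ℕ):ℤ) := by
    rw [← zpow_add₀ (by positivity : (p:ℝ) ≠ 0)]
    norm_num
    ring_nf
  rw [hfin]
  apply mul_le_mul_of_nonneg_left hbound (by positivity)


theorem stmt_3 (p : ℕ) [Fact p.Prime] (hodd : Odd p) (r : ℕ) (hr : 0 < r) :
    ‖((∑ k ∈ Finset.range ((p ^ r + 1) / 2 + 1),
          (4 * (k : ℚ) - 1) ^ 3 / (256 ^ k * (2 * (k : ℚ) - 1) ^ 4) *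
            (Nat.choose (2 * k) k : ℚ) ^ 4 : ℚ) : ℚ_[p])
        - 3 * (p : ℚ_[p]) ^ (4 * r)‖ ≤ (p : ℝ) ^ (-(4 * (r : ℤ) + 1)) := by
  obtain ⟨t, ht⟩ := (hodd.pow : Odd (p^r))
  set n : ℕ := (p^r+1)/2 with hn
  have hnt : n = t + 1 := by omega
  rw [closed_form n]
  exact main_aux p hodd r hr n t ht hnt
end

section
/- Let p be an odd prime and r a positive integer. Then \(\sum_{k=0}^{p^r-1} \frac{(4k-1)^3}{256^k (2k-1)^4} \binom{2k}{k}^4 \equiv 3 p^{4r} \pmod{p^{4r+1}}\). -/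
open Finset

lemma step (m x c d : ℚ) (h1 : 2*m-1 ≠ 0) (h2 : 2*m+1 ≠ 0) (h3 : m+1 ≠ 0) (hx : x ≠ 0)
    (hd : (m+1) * d = 2*(2*m+1)*c) :
    16*m^4*(8*m^2-12*m+3)*c^4/((2*m-1)^4*x) + (4*m-1)^3/(x*(2*m-1)^4)*c^4
    = 16*(m+1)^4*(8*(m+1)^2-12*(m+1)+3)*d^4/((2*(m+1)-1)^4*(x*256)) := by
  have h2' : 2*(m+1)-1 ≠ 0 := by intro h; exact h2 (by linarith)
  have hd' : d = 2*(2*m+1)*c/(m+1) := by field_simp; linarith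
  rw [hd']
  rw [div_pow, div_mul_eq_mul_div, mul_div_assoc', div_add_div _ _ (by positivity) (by positivity), div_div, div_eq_div_iff (by positivity) (by positivity)]
  ring

lemma sum_closed (n : ℕ) :
    (∑ k ∈ Finset.range n,
        (4 * (k : ℚ) - 1) ^ 3 / (256 ^ k * (2 * (k : ℚ) - 1) ^ 4) *
          (Nat.choose (2 * k) k : ℚ) ^ 4) =
      16 * (n : ℚ) ^ 4 * (8 * (n : ℚ) ^ 2 - 12 * n + 3) * (Nat.choose (2 * n) n : ℚ) ^ 4
        / ((2 * (n : ℚ) - 1) ^ 4 * 256 ^ n) := by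
  induction n with
  | zero => simp
  | succ n ih =>
    have h1 : 2 * (n : ℚ) - 1 ≠ 0 := by
      have h : (2 * n : ℕ) ≠ 1 := by omega
      intro hc
      exact h (by exact_mod_cast (by linarith : (2 * (n:ℚ)) = 1))
    have h2 : 2 * (n : ℚ) + 1 ≠ 0 := by positivity
    have h3 : (n : ℚ) + 1 ≠ 0 := by positivity
    have h4 : (256 : ℚ) ^ n ≠ 0 := by positivity
    have hd : ((n:ℚ)+1) * ((2 * (n+1)).choose (n+1) : ℚ)
        = 2*(2*(n:ℚ)+1)*((2 * n).choose n : ℚ) := by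
      have h := Nat.succ_mul_centralBinom_succ n
      rw [Nat.centralBinom, Nat.centralBinom] at h
      exact_mod_cast congrArg (Nat.cast (R := ℚ)) h
    have key := step (n:ℚ) ((256:ℚ)^n) ((2 * n).choose n : ℚ)
      ((2 * (n+1)).choose (n+1) : ℚ) h1 h2 h3 h4 hd
    rw [Finset.sum_range_succ, ih]
    push_cast
    rw [pow_succ (256 : ℚ) n]
    linear_combination key

lemma choose_pow_mod (p : ℕ) [Fact p.Prime] (r : ℕ) :
    (((2 * p ^ r).choose (p ^ r) : ℕ) : ZMod p) = 2 := by
  have hp : 0 < p := (Fact.out (p := p.Prime)).pos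
  induction r with
  | zero => norm_num
  | succ r ih =>
    have h := Choose.choose_modEq_choose_mod_mul_choose_div
      (p := p) (n := 2 * p ^ (r + 1)) (k := p ^ (r + 1))
    have e1 : 2 * p ^ (r + 1) = 2 * p ^ r * p := by ring
    have e2 : p ^ (r + 1) = p ^ r * p := by ring
    rw [e1, e2, Nat.mul_mod_left, Nat.mul_mod_left,
      Nat.mul_div_cancel _ hp, Nat.mul_div_cancel _ hp] at h
    have h' := (ZMod.intCast_eq_intCast_iff _ _ _).mpr h
    push_cast at h'
    rw [e1, e2, h', ih]
    norm_num

theorem stmt_4 (p : ℕ) [Fact p.Prime] (hodd : Odd p) (r : ℕ) (hr : 0 < r) :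
    ‖((∑ k ∈ Finset.range (p ^ r),
          (4 * (k : ℚ) - 1) ^ 3 / (256 ^ k * (2 * (k : ℚ) - 1) ^ 4) *
            (Nat.choose (2 * k) k : ℚ) ^ 4 : ℚ) : ℚ_[p])
        - 3 * (p : ℚ_[p]) ^ (4 * r)‖ ≤ (p : ℝ) ^ (-(4 * (r : ℤ) + 1)) := by
  have hp := Fact.out (p := p.Prime)
  have hp2 : p ≠ 2 := by rintro rfl; exact (Nat.not_odd_iff_even.mpr even_two) hodd
  set n : ℕ := p ^ r with hn
  set C : ℕ := (2 * n).choose n with hC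
  set A : ℤ := 16 * (8 * (n : ℤ) ^ 2 - 12 * n + 3) * C ^ 4 - 3 * (2 * (n : ℤ) - 1) ^ 4 * 256 ^ n
    with hA
  set B : ℤ := (2 * (n : ℤ) - 1) ^ 4 * 256 ^ n with hB
  -- nonzero denominators
  have hn1 : 1 ≤ n := Nat.one_le_pow _ _ hp.pos
  have h1 : 2 * (n : ℚ) - 1 ≠ 0 := by
    have : (1:ℚ) ≤ (n:ℚ) := by exact_mod_cast hn1
    intro h; linarith
  have h4 : (256 : ℚ) ^ n ≠ 0 := by positivity
  have hBQ : ((B : ℤ) : ℚ) ≠ 0 := by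
    push_cast [hB]
    positivity
  -- the rational identity
  have hnq : ((n : ℕ) : ℚ) = (p : ℚ) ^ r := by push_cast [hn]; ring
  have key : (∑ k ∈ Finset.range n,
        (4 * (k : ℚ) - 1) ^ 3 / (256 ^ k * (2 * (k : ℚ) - 1) ^ 4) *
          (Nat.choose (2 * k) k : ℚ) ^ 4) - 3 * (p:ℚ) ^ (4 * r)
      = (p : ℚ) ^ (4 * r) * ((A : ℚ) / (B : ℚ)) := by
    rw [sum_closed n]
    have hp4 : (p : ℚ) ^ (4 * r) = ((n:ℕ) : ℚ) ^ 4 := by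
      rw [hnq, ← pow_mul, mul_comm 4 r]
    rw [hp4, ← hC]
    push_cast [hA, hB]
    rw [mul_div_assoc', eq_div_iff (by positivity), sub_mul, div_mul_cancel₀ _ (by positivity)]
    ring
  -- p divides A
  have hdvdA : (p : ℤ) ∣ A := by
    rw [← ZMod.intCast_zmod_eq_zero_iff_dvd]
    have hnz : ((n : ℤ) : ZMod p) = 0 := by
      push_cast [hn]
      simp [ZMod.natCast_self, zero_pow hr.ne']
    have hCz : ((C : ℤ) : ZMod p) = 2 := by
      push_cast [hC]
      exact_mod_cast choose_pow_mod p r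
    have h256 : ((256 : ℤ) : ZMod p) ^ n = 256 := by
      push_cast [hn]
      exact ZMod.pow_card_pow _
    push_cast [hA]
    push_cast at hnz hCz h256
    rw [hnz, hCz, h256]
    norm_num
  -- p does not divide B
  have hndvdB : ¬ (p : ℤ) ∣ B := by
    rw [← ZMod.intCast_zmod_eq_zero_iff_dvd]
    have hnz : ((n : ℤ) : ZMod p) = 0 := by
      push_cast [hn]
      simp [ZMod.natCast_self, zero_pow hr.ne']
    have h256 : ((256 : ℤ) : ZMod p) ^ n = 256 := by
      push_cast [hn]
      exact ZMod.pow_card_pow _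
    have h2 : (2 : ZMod p) ≠ 0 := by
      intro h
      have h0 : ((2 : ℕ) : ZMod p) = 0 := by exact_mod_cast h
      rw [ZMod.natCast_eq_zero_iff] at h0
      exact hp2 ((Nat.prime_dvd_prime_iff_eq hp Nat.prime_two).mp h0)
    push_cast [hB]
    push_cast at hnz h256
    rw [hnz, h256]
    have h28 : (2 : ZMod p) ^ 8 ≠ 0 := pow_ne_zero 8 h2
    intro hz
    apply h28
    rw [show (2 : ZMod p) ^ 8 = 256 by norm_num]
    linear_combination hz
  -- norms
  have hnormB : ‖((B : ℤ) : ℚ_[p])‖ = 1 := by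
    refine le_antisymm (Padic.norm_int_le_one B) ?_
    by_contra hlt
    push_neg at hlt
    exact hndvdB ((Padic.norm_intCast_lt_one_iff (k := B)).mp hlt)
  have hnormA : ‖((A : ℤ) : ℚ_[p])‖ ≤ (p : ℝ) ^ (-(1:ℤ)) := by
    have := (Padic.norm_int_le_pow_iff_dvd A 1).mpr (by simpa using hdvdA)
    simpa using this
  have hcast : ((∑ k ∈ Finset.range n,
        (4 * (k : ℚ) - 1) ^ 3 / (256 ^ k * (2 * (k : ℚ) - 1) ^ 4) *
          (Nat.choose (2 * k) k : ℚ) ^ 4 : ℚ) : ℚ_[p]) - 3 * (p : ℚ_[p]) ^ (4 * r)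
      = (p : ℚ_[p]) ^ (4 * r) * (((A : ℤ) : ℚ_[p]) / ((B : ℤ) : ℚ_[p])) := by
    have := congrArg (fun q : ℚ => (q : ℚ_[p])) key
    push_cast at this
    convert this using 2 <;> push_cast <;> ring
  rw [hcast]
  rw [norm_mul, norm_div, norm_pow, Padic.norm_p, hnormB, div_one]
  have hppos : (0:ℝ) < p := by exact_mod_cast hp.pos
  have hineq : ((p:ℝ)⁻¹) ^ (4 * r) * (p:ℝ) ^ (-(1:ℤ)) = (p : ℝ) ^ (-(4 * (r : ℤ) + 1)) := by
    have hne : (p:ℝ) ≠ 0 := ne_of_gt hppos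
    rw [inv_pow, ← zpow_natCast (p:ℝ) (4*r), ← zpow_neg, ← zpow_add₀ hne]
    congr 1
    push_cast
    ring
  rw [← hineq]
  exact mul_le_mul_of_nonneg_left hnormA (by positivity)
end

section
/- Let n > 1 be an odd integer. Then \(\frac{(q^{-2};q^4)_{(n+1)/2}}{(q^4;q^4)_{(n+1)/2}} \equiv (-1)^{(n+1)/2} q^{(n-1)^2/2 - 2} \pmod{\Phi_n(q^2)}\), meaning that \((q^{-2};q^4)_{(n+1)/2} - (-1)^{(n+1)/2} q^{(n-1)^2/2 - 2} (q^4;q^4)_{(n+1)/2}\) is divisible by \(\Phi_n(q^2)\) in \(\mathbb{Q}[q,q^{-1}]\). -/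
open Finset Polynomial

/-- `f` is a Laurent polynomial: of the form `q^{-m} g(q)` for a polynomial `g`. -/
def IsLaurent (f : RatFunc ℚ) : Prop :=
  ∃ (g : Polynomial ℚ) (m : ℕ),
    f = algebraMap (Polynomial ℚ) (RatFunc ℚ) g * RatFunc.X ^ (-(m : ℤ))

private lemma quot_dvd (k : ℕ) :
    ((Polynomial.cyclotomic (2*k+3) ℚ).comp (Polynomial.X^2)) ∣
      (∏ j ∈ Finset.range (k+2), ((Polynomial.X : ℚ[X])^2 - Polynomial.X^(4*j))
        - (-1)^(k+2) * Polynomial.X^(2*(k+2)*(k+1)) *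
            ∏ j ∈ Finset.range (k+2), (1 - (Polynomial.X:ℚ[X])^(4*j+4))) := by
  set n := 2*k+3 with hn
  have hdvd1 : (cyclotomic n ℚ).comp (X^2) ∣ (X:ℚ[X])^(2*n) - 1 := by
    obtain ⟨c, hc⟩ := cyclotomic.dvd_X_pow_sub_one n ℚ
    refine ⟨c.comp (X^2), ?_⟩
    have h := congrArg (fun p => Polynomial.comp p (X^2 : ℚ[X])) hc
    simp only [sub_comp, pow_comp, X_comp, one_comp, mul_comp] at h
    rw [← pow_mul] at h
    exact h
  rw [← Ideal.Quotient.eq_zero_iff_dvd]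
  set u : ℚ[X] ⧸ Ideal.span {(cyclotomic n ℚ).comp (X^2 : ℚ[X])} :=
    Ideal.Quotient.mk _ X with hu
  have hu1 : u ^ (2*n) = 1 := by
    have h0 := (Ideal.Quotient.eq_zero_iff_dvd ((cyclotomic n ℚ).comp (X^2 : ℚ[X])) _).mpr hdvd1
    rw [map_sub, map_pow, map_one, sub_eq_zero] at h0
    exact h0
  have key : ∀ j ∈ Finset.range (k+2),
      (u^2 - u^(4*j)) = ((-1) * u^(4*j)) * (1 - u^(4*((k+2)-1-j)+4)) := by
    intro j hj
    have hj' : j < k+2 := Finset.mem_range.mp hj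
    have hexp : 4*j + (4*((k+2)-1-j)+4) = 2*n + 2 := by omega
    have h2 : u^(4*j) * u^(4*((k+2)-1-j)+4) = u^2 := by
      rw [← pow_add, hexp, pow_add, hu1, one_mul]
    linear_combination -h2
  have hsum : ∑ j ∈ Finset.range (k+2), 4*j = 2*(k+2)*(k+1) := by
    have h := Finset.sum_range_id_mul_two (k+2)
    have h4 : ∑ j ∈ Finset.range (k+2), 4*j = 4 * ∑ j ∈ Finset.range (k+2), j := by
      rw [Finset.mul_sum]
    have h5 : (k+2)*(k+2-1) = (k+2)*(k+1) := rfl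
    rw [h5] at h
    linarith
  rw [map_sub, map_mul, map_mul, map_prod, map_prod]
  simp only [map_sub, map_pow, map_one, map_neg]
  rw [Finset.prod_congr rfl key, Finset.prod_mul_distrib,
    Finset.prod_range_reflect (fun j => 1 - u^(4*j+4)) (k+2),
    Finset.prod_mul_distrib, Finset.prod_const, Finset.card_range,
    Finset.prod_pow_eq_pow_sum, hsum]
  ring

theorem stmt_7 (n : ℕ) (hn : 1 < n) (hodd : Odd n) :
    IsLaurent
      ((qpoch (RatFunc.X ^ (-2 : ℤ)) (RatFunc.X ^ 4) ((n + 1) / 2)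
          - (-1) ^ ((n + 1) / 2) * RatFunc.X ^ (((n : ℤ) - 1) ^ 2 / 2 - 2) *
              qpoch (RatFunc.X ^ 4) (RatFunc.X ^ 4) ((n + 1) / 2))
        / Polynomial.aeval ((RatFunc.X : RatFunc ℚ) ^ 2) (Polynomial.cyclotomic n ℚ)) := by
  obtain ⟨k, hk⟩ : ∃ k, n = 2*k+3 := by
    obtain ⟨t, ht⟩ := hodd; exact ⟨t - 1, by omega⟩
  subst hk
  have hm : (2*k+3 + 1)/2 = k + 2 := by omega
  rw [hm]
  have hX : (RatFunc.X : RatFunc ℚ) ≠ 0 := RatFunc.X_ne_zero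
  -- e1 : first qpoch times X^(2(k+2))
  have e1 : qpoch (RatFunc.X ^ (-2:ℤ)) (RatFunc.X^4) (k+2) * RatFunc.X^(2*(k+2))
      = ∏ j ∈ Finset.range (k+2), ((RatFunc.X : RatFunc ℚ)^2 - RatFunc.X^(4*j)) := by
    rw [qpoch, show (RatFunc.X:RatFunc ℚ)^(2*(k+2)) = ∏ _j ∈ Finset.range (k+2), RatFunc.X^2 by
      rw [Finset.prod_const, Finset.card_range, ← pow_mul]]
    rw [← Finset.prod_mul_distrib]
    refine Finset.prod_congr rfl fun j _ => ?_
    have hz : (RatFunc.X:RatFunc ℚ)^(-2:ℤ) = ((RatFunc.X:RatFunc ℚ)^(2:ℕ))⁻¹ := by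
      rw [show (-2:ℤ) = -((2:ℕ):ℤ) by norm_num, zpow_neg, zpow_natCast]
    rw [hz]
    have h4j : ((RatFunc.X:RatFunc ℚ)^4)^j = RatFunc.X^(4*j) := by rw [← pow_mul]
    rw [h4j]
    field_simp
  -- e2 : second qpoch
  have e2 : qpoch (RatFunc.X^4) (RatFunc.X^4) (k+2)
      = ∏ j ∈ Finset.range (k+2), (1 - (RatFunc.X : RatFunc ℚ)^(4*j+4)) := by
    rw [qpoch]
    refine Finset.prod_congr rfl fun j _ => ?_
    rw [← pow_mul, ← pow_add]
    ring_nf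
  -- e3 : exponent arithmetic
  have e3 : (RatFunc.X : RatFunc ℚ) ^ ((((2*k+3 : ℕ):ℤ) - 1)^2/2 - 2)
      = RatFunc.X ^ (2*k*(k+2)) := by
    have h4 : (((2*k+3 : ℕ):ℤ) - 1)^2 = 2*(2*(k:ℤ)^2+4*k+2) := by push_cast; ring
    have h5 : ((((2*k+3 : ℕ):ℤ) - 1)^2/2 - 2) = ((2*k*(k+2) : ℕ):ℤ) := by
      rw [h4, Int.mul_ediv_cancel_left _ two_ne_zero]; push_cast; ring
    rw [h5, zpow_natCast]
  rw [e3]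
  obtain ⟨G, hG⟩ := quot_dvd k
  refine ⟨G, 2*(k+2), ?_⟩
  have hΦmonic : ((cyclotomic (2*k+3) ℚ).comp (X^2 : ℚ[X])).Monic :=
    (Polynomial.cyclotomic.monic _ ℚ).comp (monic_X_pow 2) (by simp)
  have hΦ0 : algebraMap ℚ[X] (RatFunc ℚ) ((cyclotomic (2*k+3) ℚ).comp (X^2)) ≠ 0 :=
    RatFunc.algebraMap_ne_zero hΦmonic.ne_zero
  have hD : (Polynomial.aeval ((RatFunc.X : RatFunc ℚ)^2)) (cyclotomic (2*k+3) ℚ)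
      = algebraMap ℚ[X] (RatFunc ℚ) ((cyclotomic (2*k+3) ℚ).comp (X^2)) := by
    rw [comp_eq_aeval]
    have h := Polynomial.aeval_algHom_apply (IsScalarTower.toAlgHom ℚ ℚ[X] (RatFunc ℚ))
      (X^2 : ℚ[X]) (cyclotomic (2*k+3) ℚ)
    simp only [IsScalarTower.coe_toAlgHom', map_pow, RatFunc.algebraMap_X] at h
    exact h
  have hNX : (qpoch (RatFunc.X ^ (-2:ℤ)) (RatFunc.X^4) (k+2)
        - (-1)^(k+2) * RatFunc.X ^ (2*k*(k+2)) * qpoch (RatFunc.X^4) (RatFunc.X^4) (k+2))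
          * RatFunc.X^(2*(k+2))
      = algebraMap ℚ[X] (RatFunc ℚ) ((cyclotomic (2*k+3) ℚ).comp (X^2))
          * algebraMap ℚ[X] (RatFunc ℚ) G := by
    rw [← map_mul, ← hG]
    simp only [map_sub, map_mul, map_prod, map_pow, map_one, map_neg, RatFunc.algebraMap_X]
    rw [sub_mul, e1, e2]
    have hpw : (RatFunc.X:RatFunc ℚ)^(2*(k+2)*(k+1))
        = RatFunc.X^(2*k*(k+2)) * RatFunc.X^(2*(k+2)) := by
      rw [← pow_add]; congr 1; ring
    rw [hpw]; ring
  have hzp : (RatFunc.X : RatFunc ℚ) ^ (-((2*(k+2) : ℕ) : ℤ))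
      = ((RatFunc.X:RatFunc ℚ)^(2*(k+2)))⁻¹ := by
    rw [zpow_neg, zpow_natCast]
  have hXp : (RatFunc.X:RatFunc ℚ)^(2*(k+2)) ≠ 0 := pow_ne_zero _ hX
  rw [hD, hzp, div_eq_iff hΦ0]
  have hre : algebraMap ℚ[X] (RatFunc ℚ) G * (RatFunc.X^(2*(k+2)))⁻¹
        * algebraMap ℚ[X] (RatFunc ℚ) ((cyclotomic (2*k+3) ℚ).comp (X^2))
      = (algebraMap ℚ[X] (RatFunc ℚ) ((cyclotomic (2*k+3) ℚ).comp (X^2))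
          * algebraMap ℚ[X] (RatFunc ℚ) G) * (RatFunc.X^(2*(k+2)))⁻¹ := by ring
  rw [hre, ← hNX, mul_inv_cancel_right₀ hXp]
end

section
/- Let n > 1 be an odd integer. Then the Gaussian binomial coefficient satisfies \(\binom{2n}{n}_{q^2} \equiv 2 \pmod{\Phi_n(q^2)}\), i.e., \(\binom{2n}{n}_{q^2} - 2\) is divisible by \(\Phi_n(q^2)\) in \(\mathbb{Z}[q]\). -/
open Finset Polynomial

/-- `(Q; Q)_m = ∏_{j=1}^{m} (1 - Q^j)` with `Q = X^2`, in `ℤ[X]`. -/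
noncomputable def pp (m : ℕ) : Polynomial ℤ :=
  ∏ j ∈ Finset.range m, (1 - (X : Polynomial ℤ) ^ (2 * (j + 1)))

noncomputable def gb : ℕ → ℕ → Polynomial ℤ
  | _, 0 => 1
  | 0, _+1 => 0
  | m+1, k+1 => gb m k + X ^ (2 * (k + 1)) * gb m (k + 1)

lemma gb_gt {m k : ℕ} (h : m < k) : gb m k = 0 := by
  induction m generalizing k with
  | zero => cases k with
    | zero => omega
    | succ k => rfl
  | succ m ih =>
    cases k with
    | zero => omega
    | succ k =>
      show gb m k + X ^ (2 * (k + 1)) * gb m (k + 1) = 0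
      rw [ih (by omega), ih (by omega)]; ring

lemma gb_diag (m : ℕ) : gb m m = 1 := by
  induction m with
  | zero => rfl
  | succ m ih =>
    show gb m m + X ^ (2 * (m + 1)) * gb m (m + 1) = 1
    rw [ih, gb_gt (by omega)]; ring

lemma pp_succ (m : ℕ) : pp (m + 1) = pp m * (1 - X ^ (2 * (m + 1))) := by
  simp [pp, Finset.prod_range_succ]

lemma gb_key : ∀ m k j : ℕ, m = k + j → gb m k * (pp k * pp j) = pp m := by
  intro m
  induction m with
  | zero =>
    intro k j h
    obtain ⟨rfl, rfl⟩ : k = 0 ∧ j = 0 := by omega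
    simp [gb, pp]
  | succ m ih =>
    intro k j h
    cases k with
    | zero =>
      obtain rfl : j = m + 1 := by omega
      simp [gb, pp]
    | succ k =>
      cases j with
      | zero =>
        obtain rfl : k = m := by omega
        simp [gb_diag, pp]
      | succ j =>
        have hm : m = k + (j + 1) := by omega
        have h1 := ih k (j + 1) hm
        have h2 := ih (k + 1) j (by omega)
        show (gb m k + X ^ (2 * (k + 1)) * gb m (k + 1)) * (pp (k + 1) * pp (j + 1)) = pp (m + 1)
        rw [pp_succ m, pp_succ k, pp_succ j] at *
        have hx : (X : Polynomial ℤ) ^ (2 * (k + 1)) * X ^ (2 * (j + 1)) = X ^ (2 * (m + 1)) := by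
          rw [← pow_add]; congr 1; omega
        linear_combination (1 - (X:Polynomial ℤ) ^ (2 * (k + 1))) * h1 +
          (X:Polynomial ℤ) ^ (2 * (k + 1)) * (1 - X ^ (2 * (j + 1))) * h2 - pp m * hx

lemma cyclo_not_dvd_one_sub_pow {N k : ℕ} (hN : 0 < N) (hNk : ¬ N ∣ k) :
    ¬ Polynomial.cyclotomic N ℤ ∣ (1 - (X : Polynomial ℤ) ^ k) := by
  intro h
  set ζ : ℂ := Complex.exp (2 * Real.pi * Complex.I / N)
  have hζ : IsPrimitiveRoot ζ N := Complex.isPrimitiveRoot_exp N hN.ne'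
  obtain ⟨t, ht⟩ := h
  have := congrArg (fun p : Polynomial ℤ =>
    Polynomial.eval ζ (Polynomial.map (Int.castRingHom ℂ) p)) ht
  simp only [Polynomial.map_mul, Polynomial.map_sub, Polynomial.map_one, Polynomial.map_pow,
    Polynomial.map_X, map_cyclotomic, eval_mul, eval_sub, eval_one, eval_pow, eval_X] at this
  have hroot : Polynomial.eval ζ (Polynomial.cyclotomic N ℂ) = 0 := hζ.isRoot_cyclotomic hN
  rw [hroot, zero_mul, sub_eq_zero] at this
  exact hNk (hζ.dvd_of_pow_eq_one k this.symm)

lemma one_sub_X_pow_ne_zero {k : ℕ} (hk : 0 < k) : (1 - (X : Polynomial ℤ) ^ k) ≠ 0 := by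
  intro h
  have := congrArg (Polynomial.eval 0) h
  simp [zero_pow hk.ne'] at this

lemma pp_ne_zero (m : ℕ) : pp m ≠ 0 := by
  rw [pp]
  refine Finset.prod_ne_zero_iff.mpr fun j _ => one_sub_X_pow_ne_zero (by omega)

theorem stmt_8 (n : ℕ) (hn : 1 < n) (hodd : Odd n) :
    ∃ B : Polynomial ℤ,
      B * (pp n) ^ 2 = pp (2 * n) ∧
        (Polynomial.cyclotomic n ℤ).comp ((X : Polynomial ℤ) ^ 2) ∣ B - 2 := by
  have hn0 : 0 < n := by omega
  obtain ⟨m, hm⟩ : ∃ m, n = m + 1 := ⟨n - 1, by omega⟩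
  set G := gb (2 * n) n with hG
  set P := (Polynomial.cyclotomic n ℤ).comp ((X : Polynomial ℤ) ^ 2) with hPdef
  set D : Polynomial ℤ := ∏ j ∈ Finset.range m, (1 - (X : Polynomial ℤ) ^ (2 * (n + j + 1)))
    with hDdef
  set E : Polynomial ℤ := ∏ j ∈ Finset.range n, (1 - (X : Polynomial ℤ) ^ (2 * (n + j + 1)))
    with hEdef
  -- key product identity
  have hkey : G * (pp n * pp n) = pp (2 * n) := gb_key (2 * n) n n (two_mul n)
  have hppE : pp (2 * n) = pp n * E := by
    rw [pp, two_mul, Finset.prod_range_add]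
    rfl
  have hE : G * pp n = E := by
    apply mul_left_cancel₀ (pp_ne_zero n)
    linear_combination hkey + hppE
  have hED : E = D * (1 - (X : Polynomial ℤ) ^ (2 * (2 * n))) := by
    rw [hEdef, hDdef, show Finset.range n = Finset.range (m + 1) by rw [hm],
      Finset.prod_range_succ, show 2 * (n + m + 1) = 2 * (2 * n) by omega]
  have hppn : pp n = pp m * (1 - (X : Polynomial ℤ) ^ (2 * n)) := by
    rw [hm, pp_succ]
  have hfact : (1 : Polynomial ℤ) - X ^ (2 * (2 * n))
      = (1 - X ^ (2 * n)) * (1 + X ^ (2 * n)) := by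
    have hx : (X : Polynomial ℤ) ^ (2 * (2 * n)) = X ^ (2 * n) * X ^ (2 * n) := by
      rw [← pow_add]; congr 1; omega
    rw [hx]; ring
  have hmain : G * pp m = D * (1 + X ^ (2 * n)) := by
    apply mul_right_cancel₀ (one_sub_X_pow_ne_zero (k := 2 * n) (by omega))
    linear_combination (-G) * hppn + hE + hED + D * hfact
  -- the modulus divides X^(2n) - 1
  have h1 : P ∣ (X : Polynomial ℤ) ^ (2 * n) - 1 := by
    obtain ⟨k, hk⟩ := cyclotomic.dvd_X_pow_sub_one n ℤ
    refine ⟨k.comp (X ^ 2), ?_⟩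
    have h := congrArg (fun p : Polynomial ℤ => p.comp ((X : Polynomial ℤ) ^ 2)) hk
    simp only [sub_comp, X_pow_comp, one_comp, mul_comp] at h
    rw [pow_mul]
    exact h
  -- work modulo P
  set I := Ideal.span {P} with hI
  have hq : (Ideal.Quotient.mk I) ((X : Polynomial ℤ) ^ (2 * n)) = 1 := by
    have hmem : ((X : Polynomial ℤ) ^ (2 * n) - 1) ∈ I := Ideal.mem_span_singleton.mpr h1
    have h0 := (Ideal.Quotient.eq_zero_iff_mem).mpr hmem
    rw [map_sub, map_one, sub_eq_zero] at h0
    exact h0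
  have hDc : (Ideal.Quotient.mk I) D = (Ideal.Quotient.mk I) (pp m) := by
    rw [hDdef, pp, map_prod, map_prod]
    refine Finset.prod_congr rfl fun j _ => ?_
    have hexp : 2 * (n + j + 1) = 2 * n + 2 * (j + 1) := by ring
    rw [hexp, pow_add, map_sub, map_sub, map_one, map_mul, hq, one_mul]
  have hq' : ((Ideal.Quotient.mk I) (X : Polynomial ℤ)) ^ (2 * n) = 1 := by
    rw [← map_pow]; exact hq
  have hdvdP : P ∣ (G - 2) * pp m := by
    refine Ideal.mem_span_singleton.mp (Ideal.Quotient.eq_zero_iff_mem.mp ?_)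
    have hmk := congrArg (Ideal.Quotient.mk I) hmain
    simp only [map_mul, map_add, map_one, map_pow, hq'] at hmk
    simp only [map_mul, map_sub, map_ofNat]
    linear_combination hmk + 2 * hDc
  -- factor P into two cyclotomics
  have h2 : ¬ (2 : ℕ) ∣ n := by
    have := Nat.odd_iff.mp hodd
    omega
  have hP2 : P = Polynomial.cyclotomic (2 * n) ℤ * Polynomial.cyclotomic n ℤ := by
    have h := cyclotomic_expand_eq_cyclotomic_mul Nat.prime_two h2 ℤ
    rw [expand_eq_comp_X_pow] at h
    rw [hPdef, h, show n * 2 = 2 * n by ring]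
  have hprime_n : Prime (Polynomial.cyclotomic n ℤ) :=
    UniqueFactorizationMonoid.irreducible_iff_prime.mp (cyclotomic.irreducible hn0)
  have hprime_2n : Prime (Polynomial.cyclotomic (2 * n) ℤ) :=
    UniqueFactorizationMonoid.irreducible_iff_prime.mp (cyclotomic.irreducible (by omega))
  -- neither cyclotomic divides pp m
  have hnc : ¬ Polynomial.cyclotomic n ℤ ∣ pp m := by
    intro h
    rw [pp] at h
    obtain ⟨j, hj, hdj⟩ := hprime_n.exists_mem_finset_dvd h
    refine cyclo_not_dvd_one_sub_pow hn0 ?_ hdj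
    intro hdvd
    have hcop : Nat.Coprime n 2 := hodd.coprime_two_right
    have : n ∣ j + 1 := hcop.dvd_of_dvd_mul_left hdvd
    have := Nat.le_of_dvd (by omega) this
    simp only [Finset.mem_range] at hj
    omega
  have h2nc : ¬ Polynomial.cyclotomic (2 * n) ℤ ∣ pp m := by
    intro h
    rw [pp] at h
    obtain ⟨j, hj, hdj⟩ := hprime_2n.exists_mem_finset_dvd h
    refine cyclo_not_dvd_one_sub_pow (by omega) ?_ hdj
    intro hdvd
    have : n ∣ j + 1 := (Nat.mul_dvd_mul_iff_left (by omega : 0 < 2)).mp hdvd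
    have := Nat.le_of_dvd (by omega) this
    simp only [Finset.mem_range] at hj
    omega
  have hcc : ¬ Polynomial.cyclotomic (2 * n) ℤ ∣ Polynomial.cyclotomic n ℤ := by
    intro h
    have hd : Polynomial.cyclotomic (2 * n) ℤ ∣ (1 - (X : Polynomial ℤ) ^ n) := by
      rw [show (1 : Polynomial ℤ) - X ^ n = -(X ^ n - 1) by ring]
      exact dvd_neg.mpr (h.trans (cyclotomic.dvd_X_pow_sub_one n ℤ))
    refine cyclo_not_dvd_one_sub_pow (by omega) ?_ hd
    intro hdvd
    have := Nat.le_of_dvd hn0 hdvd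
    omega
  -- combine
  have hd_n : Polynomial.cyclotomic n ℤ ∣ (G - 2) * pp m :=
    (Dvd.intro_left _ hP2.symm).trans hdvdP
  have hA : Polynomial.cyclotomic n ℤ ∣ G - 2 := by
    rcases hprime_n.2.2 _ _ hd_n with h | h
    · exact h
    · exact absurd h hnc
  obtain ⟨t, ht⟩ := hA
  have hd_2n : Polynomial.cyclotomic (2 * n) ℤ ∣ (G - 2) * pp m :=
    dvd_trans ⟨Polynomial.cyclotomic n ℤ, hP2⟩ hdvdP
  obtain ⟨s, hs⟩ : Polynomial.cyclotomic (2 * n) ℤ ∣ t := by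
    rcases hprime_2n.2.2 _ _ hd_2n with h | h
    · rw [ht] at h
      rcases hprime_2n.2.2 _ _ h with h' | h'
      · exact absurd h' hcc
      · exact h'
    · exact absurd h h2nc
  refine ⟨G, ?_, ⟨s, ?_⟩⟩
  · rw [pow_two]
    linear_combination hkey
  · rw [ht, hs, hP2]
    ring
end

section
/- Let n > 1 be an odd integer and let \(\zeta\) be a primitive n-th root of unity in \(\mathbb{C}\). Then \(\sum_{k=0}^{(n+1)/2} [4k-1]_{\zeta} [4k-1]_{\omega}^2 \frac{(\omega^{-2};\omega^4)_k^4}{(\omega^4;\omega^4)_k^4} \omega^{4k} = 0\) for any \(\omega\) with \(\omega^2 = \zeta\), i.e., the truncated sum \(\sum_{k=0}^{(n+1)/2} [4k-1]_{q^2}[4k-1]_q^2 \frac{(q^{-2};q^4)_k^4}{(q^4;q^4)_k^4} q^{4k}\) vanishes whenever \(q^2\) is a primitive n-th root of unity. -/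
open Finset

/-- The `q`-integer `[m]_x = (1 - x^m)/(1 - x)` in `ℂ`. -/
noncomputable def qintC (m : ℤ) (x : ℂ) : ℂ := (1 - x ^ m) / (1 - x)

/-- The `q`-shifted factorial `(a; x)_k = ∏_{j=0}^{k-1} (1 - a x^j)` in `ℂ`. -/
noncomputable def qpochC (a x : ℂ) (k : ℕ) : ℂ :=
  ∏ j ∈ Finset.range k, (1 - a * x ^ j)

/-- Certificate polynomial for the telescoping closed form of the truncated sum. -/
noncomputable def NN (a x : ℂ) : ℂ :=
  2*x^9
  + a*(-8*x^7 - x^8 - 2*x^9 + 2*x^10 - 2*x^11 - x^12)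
  + a^2*(12*x^5 + 4*x^6 + 8*x^7 - 8*x^8 + 8*x^9 + 4*x^10 + 2*x^11)
  + a^3*(-8*x^3 - 6*x^4 - 12*x^5 + 12*x^6 - 12*x^7 - 6*x^8 - 8*x^9)
  + a^4*(2*x + 4*x^2 + 8*x^3 - 8*x^4 + 8*x^5 + 4*x^6 + 12*x^7)
  + a^5*(-1 - 2*x + 2*x^2 - 2*x^3 - x^4 - 8*x^5)
  + a^6*(2*x^3)

set_option maxHeartbeats 1000000 in
/-- The two-variable polynomial certificate (WZ-style) identity. -/
lemma starC (x B : ℂ) :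
    x^8 * (1 - x^4*B^4)^4 * NN (B^4) x
      + (1 - B^8*x^6) * (1 - B^4*x^3)^2 * (x^2 - B^4)^4 * B^4 * x^8 * (1-x)^3 * (1+x)^5
    = (x^2 - B^4)^4 * NN (B^4*x^4) x := by
  unfold NN; ring

set_option maxHeartbeats 1000000 in
/-- The inductive step of the closed-form evaluation. -/
lemma stepAux (x B P Q S : ℂ) (hx : x ≠ 0) (hu : 1 - x ≠ 0) (hv : 1 - x^2 ≠ 0)
    (hQ : Q ≠ 0) (hf : 1 - x^4*B^4 ≠ 0)
    (hih : S * (x^4*(1-x^2)^6*Q^4) = P^4 * NN (B^4) x) :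
    (S + (1 - B^8*x^6)/(1-x^2) * ((1 - B^4*x^3)/(1-x))^2 * (P*(1-(x^2)⁻¹*B^4))^4
        / (Q*(1-x^4*B^4))^4 * (B^4*x^4)) * (x^4*(1-x^2)^6*(Q*(1-x^4*B^4))^4)
    = (P*(1-(x^2)⁻¹*B^4))^4 * NN (B^4*x^4) x := by
  have hx2 : x^2 ≠ 0 := pow_ne_zero _ hx
  have hg : (1:ℂ) - (x^2)⁻¹*B^4 = (x^2 - B^4)/x^2 := by field_simp
  rw [hg]
  have hQf : Q*(1-x^4*B^4) ≠ 0 := mul_ne_zero hQ hf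
  have hT : (1 - B^8*x^6)/(1-x^2) * ((1 - B^4*x^3)/(1-x))^2 * (P*((x^2-B^4)/x^2))^4
        / (Q*(1-x^4*B^4))^4 * (B^4*x^4) * (x^4*(1-x^2)^6*(Q*(1-x^4*B^4))^4)
      = (1 - B^8*x^6) * (1 - B^4*x^3)^2 * (P^4*(x^2-B^4)^4) * B^4 * (1-x)^3*(1+x)^5 := by
    have L1 : ∀ a b c y : ℂ, b ≠ 0 → a / b * y * (c * b) = a * y * c := by
      intro a b c y hb; field_simp
    rw [L1 _ _ _ _ (pow_ne_zero 4 (mul_ne_zero hQ hf))]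
    field_simp
    ring1
  calc (S + (1 - B^8*x^6)/(1-x^2) * ((1 - B^4*x^3)/(1-x))^2 * (P*((x^2-B^4)/x^2))^4
        / (Q*(1-x^4*B^4))^4 * (B^4*x^4)) * (x^4*(1-x^2)^6*(Q*(1-x^4*B^4))^4)
      = S * (x^4*(1-x^2)^6*Q^4) * (1-x^4*B^4)^4
        + (1 - B^8*x^6)/(1-x^2) * ((1 - B^4*x^3)/(1-x))^2 * (P*((x^2-B^4)/x^2))^4
        / (Q*(1-x^4*B^4))^4 * (B^4*x^4) * (x^4*(1-x^2)^6*(Q*(1-x^4*B^4))^4) := by ring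
    _ = P^4 * NN (B^4) x * (1-x^4*B^4)^4
        + (1 - B^8*x^6) * (1 - B^4*x^3)^2 * (P^4*(x^2-B^4)^4) * B^4 * (1-x)^3*(1+x)^5 := by
        rw [hih, hT]
    _ = (P*((x^2-B^4)/x^2))^4 * NN (B^4*x^4) x := by
        have h8 : (P*((x^2-B^4)/x^2))^4 = P^4*(x^2-B^4)^4/x^8 := by
          rw [mul_pow, div_pow, ← pow_mul, mul_div_assoc]
        rw [h8, div_mul_eq_mul_div, eq_div_iff (pow_ne_zero 8 hx)]
        linear_combination P^4 * starC x B

set_option maxHeartbeats 1000000 in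
theorem stmt_15 (n : ℕ) (hn : 1 < n) (hodd : Odd n) (ω : ℂ)
    (hω : IsPrimitiveRoot (ω ^ 2) n) :
    ∑ k ∈ Finset.range ((n + 1) / 2 + 1),
        qintC (4 * (k : ℤ) - 1) (ω ^ 2) * (qintC (4 * (k : ℤ) - 1) ω) ^ 2 *
          (qpochC (ω ^ (-2 : ℤ)) (ω ^ 4) k) ^ 4 / (qpochC (ω ^ 4) (ω ^ 4) k) ^ 4 *
            ω ^ (4 * k) = 0 := by
  have hn0 : n ≠ 0 := by omega
  have hω2ne : ω ^ 2 ≠ 0 := hω.ne_zero hn0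
  have hω0 : ω ≠ 0 := by
    intro h; apply hω2ne; rw [h]; ring
  have hω21 : ω ^ 2 ≠ 1 := by
    intro h
    have hd := hω.dvd_of_pow_eq_one 1 (by rw [pow_one, h])
    have := Nat.le_of_dvd one_pos hd
    omega
  have h1ω2 : (1 : ℂ) - ω ^ 2 ≠ 0 := by
    intro h; apply hω21; linear_combination -h
  have h1ω : (1 : ℂ) - ω ≠ 0 := by
    intro h
    apply hω21
    have : ω = 1 := by linear_combination -h
    rw [this]; ring
  have hpow : ∀ i : ℕ, 1 ≤ i → i ≤ (n + 1) / 2 → ω ^ (4 * i) ≠ 1 := by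
    intro i h1 h2 h
    have he : (ω ^ 2) ^ (2 * i) = 1 := by
      rw [← pow_mul]; rw [show 2 * (2 * i) = 4 * i by ring]; exact h
    have hdvd : n ∣ 2 * i := hω.dvd_of_pow_eq_one _ he
    have hcop : Nat.Coprime n 2 := by
      have h2' : ¬ 2 ∣ n := by
        rcases hodd with ⟨j, hj⟩
        omega
      exact Nat.coprime_comm.mp (Nat.prime_two.coprime_iff_not_dvd.mpr h2')
    have hni : n ∣ i := Nat.Coprime.dvd_of_dvd_mul_left hcop hdvd
    have := Nat.le_of_dvd (by omega) hni
    omega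
  have hpoch : ∀ m : ℕ, m ≤ (n + 1) / 2 → qpochC (ω ^ 4) (ω ^ 4) m ≠ 0 := by
    intro m hm
    unfold qpochC
    rw [Finset.prod_ne_zero_iff]
    intro j hj
    rw [Finset.mem_range] at hj
    have hj4 : (ω ^ 4) * (ω ^ 4) ^ j = ω ^ (4 * (j + 1)) := by
      rw [← pow_mul]; ring
    rw [hj4]
    intro h
    exact hpow (j + 1) (by omega) (by omega) (by linear_combination -h)
  have key : ∀ m : ℕ, m ≤ (n + 1) / 2 →
      (∑ k ∈ Finset.range (m + 1),
        qintC (4 * (k : ℤ) - 1) (ω ^ 2) * (qintC (4 * (k : ℤ) - 1) ω) ^ 2 *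
          (qpochC (ω ^ (-2 : ℤ)) (ω ^ 4) k) ^ 4 / (qpochC (ω ^ 4) (ω ^ 4) k) ^ 4 *
            ω ^ (4 * k)) * (ω ^ 4 * (1 - ω ^ 2) ^ 6 * (qpochC (ω ^ 4) (ω ^ 4) m) ^ 4)
      = (qpochC (ω ^ (-2 : ℤ)) (ω ^ 4) m) ^ 4 * NN ((ω ^ m) ^ 4) ω := by
    intro m
    induction m with
    | zero =>
      intro _
      simp only [Finset.sum_range_one, qpochC, Finset.range_zero, Finset.prod_empty]
      norm_num
      unfold qintC NN
      norm_num [zpow_neg]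
      field_simp
      ring
    | succ m ih =>
      intro hm
      have ihm := ih (by omega)
      have hPi : qpochC (ω ^ 4) (ω ^ 4) m ≠ 0 := hpoch m (by omega)
      have hfac : (1 : ℂ) - ω ^ 4 * (ω ^ m) ^ 4 ≠ 0 := by
        have h4 : (ω ^ 4) * (ω ^ m) ^ 4 = ω ^ (4 * (m + 1)) := by
          rw [← pow_mul, ← pow_add]; congr 1; omega
        rw [h4]
        intro h
        exact hpow (m + 1) (by omega) hm (by linear_combination -h)
      rw [Finset.sum_range_succ]
      have hrecQ : qpochC (ω ^ 4) (ω ^ 4) (m + 1)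
          = qpochC (ω ^ 4) (ω ^ 4) m * (1 - ω ^ 4 * (ω ^ 4) ^ m) := by
        unfold qpochC; rw [Finset.prod_range_succ]
      have hrecP : qpochC (ω ^ (-2 : ℤ)) (ω ^ 4) (m + 1)
          = qpochC (ω ^ (-2 : ℤ)) (ω ^ 4) m * (1 - ω ^ (-2 : ℤ) * (ω ^ 4) ^ m) := by
        unfold qpochC; rw [Finset.prod_range_succ]
      rw [hrecQ, hrecP]
      have e1 : (ω ^ 4) ^ m = (ω ^ m) ^ 4 := by rw [← pow_mul, ← pow_mul, mul_comm]
      have e2 : ω ^ (4 * (m + 1)) = (ω ^ m) ^ 4 * ω ^ 4 := by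
        rw [← pow_mul, ← pow_add]; congr 1; omega
      have e3 : (ω ^ (m + 1)) ^ 4 = (ω ^ m) ^ 4 * ω ^ 4 := by
        rw [← pow_mul, ← pow_mul, ← pow_add]; congr 1; omega
      have e4 : qintC (4 * ((m + 1 : ℕ) : ℤ) - 1) (ω ^ 2)
          = (1 - ((ω ^ m) ^ 8 * ω ^ 6)) / (1 - ω ^ 2) := by
        unfold qintC
        congr 2
        have hc : (4 * ((m + 1 : ℕ) : ℤ) - 1) = ((4 * m + 3 : ℕ) : ℤ) := by push_cast; ring
        rw [hc, zpow_natCast, ← pow_mul]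
        rw [show 2 * (4 * m + 3) = m * 8 + 6 by ring, pow_add, pow_mul]
      have e5 : qintC (4 * ((m + 1 : ℕ) : ℤ) - 1) ω
          = (1 - ((ω ^ m) ^ 4 * ω ^ 3)) / (1 - ω) := by
        unfold qintC
        congr 2
        have hc : (4 * ((m + 1 : ℕ) : ℤ) - 1) = ((4 * m + 3 : ℕ) : ℤ) := by push_cast; ring
        rw [hc, zpow_natCast, show 4 * m + 3 = m * 4 + 3 by ring, pow_add, pow_mul]
      have e6 : ω ^ (-2 : ℤ) = (ω ^ 2)⁻¹ := by
        rw [zpow_neg, show ((2:ℤ)) = ((2:ℕ):ℤ) from rfl, zpow_natCast]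
      rw [e1, e2, e3, e4, e5, e6]
      exact stepAux ω (ω ^ m) _ _ _ hω0 h1ω h1ω2 hPi hfac ihm
  have hfin := key ((n + 1) / 2) le_rfl
  have hexp : (ω ^ ((n + 1) / 2)) ^ 4 = ω ^ 2 := by
    rw [← pow_mul]
    have h2 : (n + 1) / 2 * 4 = 2 * n + 2 := by
      rcases hodd with ⟨j, hj⟩; omega
    rw [h2, pow_add, pow_mul, hω.pow_eq_one]
    ring
  rw [hexp] at hfin
  have hNzero : NN (ω ^ 2) ω = 0 := by unfold NN; ring
  rw [hNzero, mul_zero] at hfin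
  have hC : (ω ^ 4 * (1 - ω ^ 2) ^ 6 * (qpochC (ω ^ 4) (ω ^ 4) ((n + 1) / 2)) ^ 4) ≠ 0 :=
    mul_ne_zero (mul_ne_zero (pow_ne_zero _ hω0) (pow_ne_zero _ h1ω2))
      (pow_ne_zero _ (hpoch ((n + 1) / 2) le_rfl))
  exact (mul_eq_zero.1 hfin).resolve_right hC
end
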